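/- Let r be a positive integer and ρ > 0 a real number. Let S be a subset of ℝ^r contained in a closed Euclidean ball of radius ρ. Then for every real number γ ≥ 1, there exist at most ⌊(2γ+1)^r⌋ closed balls of radius ρ/γ, centered at points of S, whose union covers S. -/

import Mathlib

open Metric MeasureTheory Set ENNReal

/-- Volume packing bound: a finite `2ε`-separated family in a closed ball of radius `ρ`
in `ℝ^r` satisfies `card * ε^r ≤ (ρ+ε)^r`. -/
lemma remond_card_bound {r : ℕ} {ρ ε : ℝ} (hρ : 0 ≤ ρ) (hε : 0 < ε)
    (x₀ : EuclideanSpace ℝ (Fin r)) (F : Finset (EuclideanSpace ℝ (Fin r)))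
    (hF : ∀ t ∈ F, t ∈ closedBall x₀ ρ)
    (hsep : ∀ s ∈ F, ∀ t ∈ F, s ≠ t → 2 * ε < dist s t) :
    (F.card : ℝ) * ε ^ r ≤ (ρ + ε) ^ r := by
  set μ : Measure (EuclideanSpace ℝ (Fin r)) := volume
  have hdisj : (F : Set (EuclideanSpace ℝ (Fin r))).PairwiseDisjoint
      (fun t => closedBall t ε) := by
    intro s hs t ht hst
    exact closedBall_disjoint_closedBall (by
      have := hsep s hs t ht hst; linarith)
  have hmeas : μ (⋃ t ∈ F, closedBall t ε) = ∑ t ∈ F, μ (closedBall t ε) :=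
    measure_biUnion_finset hdisj (fun t _ => measurableSet_closedBall)
  have hsub : (⋃ t ∈ F, closedBall t ε) ⊆ closedBall x₀ (ρ + ε) := by
    intro z hz
    simp only [mem_iUnion] at hz
    obtain ⟨t, ht, hzt⟩ := hz
    have h1 : dist z t ≤ ε := mem_closedBall.1 hzt
    have h2 : dist t x₀ ≤ ρ := mem_closedBall.1 (hF t ht)
    exact mem_closedBall.2 ((dist_triangle z t x₀).trans (by linarith))
  have hball : ∀ (x : EuclideanSpace ℝ (Fin r)) {s : ℝ}, 0 ≤ s →
      μ (closedBall x s) = ENNReal.ofReal (s ^ r) * μ (ball 0 1) := by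
    intro x s hs
    rw [Measure.addHaar_closedBall μ x hs, finrank_euclideanSpace_fin]
  have key : (F.card : ℝ≥0∞) * (ENNReal.ofReal (ε ^ r) * μ (ball 0 1)) ≤
      ENNReal.ofReal ((ρ + ε) ^ r) * μ (ball 0 1) := by
    calc (F.card : ℝ≥0∞) * (ENNReal.ofReal (ε ^ r) * μ (ball 0 1))
        = ∑ t ∈ F, μ (closedBall t ε) := by
          rw [Finset.sum_congr rfl (fun t _ => hball t hε.le), Finset.sum_const,
            nsmul_eq_mul]
      _ = μ (⋃ t ∈ F, closedBall t ε) := hmeas.symm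
      _ ≤ μ (closedBall x₀ (ρ + ε)) := measure_mono hsub
      _ = ENNReal.ofReal ((ρ + ε) ^ r) * μ (ball 0 1) := hball x₀ (by linarith)
  have hb0 : μ (ball 0 1) ≠ 0 := (measure_ball_pos μ 0 one_pos).ne'
  have hbt : μ (ball 0 1) ≠ ⊤ := measure_ball_lt_top.ne
  have key2 : (F.card : ℝ≥0∞) * ENNReal.ofReal (ε ^ r) ≤ ENNReal.ofReal ((ρ + ε) ^ r) := by
    rw [← mul_assoc] at key
    exact (ENNReal.mul_le_mul_iff_left hb0 hbt).1 key
  have : ENNReal.ofReal ((F.card : ℝ) * ε ^ r) ≤ ENNReal.ofReal ((ρ + ε) ^ r) := by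
    rwa [ENNReal.ofReal_mul (by positivity), ENNReal.ofReal_natCast]
  have := (ENNReal.ofReal_le_ofReal_iff (by positivity)).1 this
  linarith
/-- Rémond's covering lemma: a subset `S` of `ℝ^r` contained in a closed ball of
radius `ρ` can be covered by at most `⌊(2γ+1)^r⌋` closed balls of radius `ρ/γ`
centered at points of `S`. -/
theorem remond_covering_lemma
    (r : ℕ) (hr : 0 < r) (ρ : ℝ) (hρ : 0 < ρ)
    (x₀ : EuclideanSpace ℝ (Fin r)) (S : Set (EuclideanSpace ℝ (Fin r)))
    (hS : S ⊆ Metric.closedBall x₀ ρ) (γ : ℝ) (hγ : 1 ≤ γ) :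
    ∃ I : Finset (EuclideanSpace ℝ (Fin r)),
      ↑I ⊆ S ∧ (I.card : ℤ) ≤ ⌊(2 * γ + 1) ^ r⌋ ∧
      S ⊆ ⋃ c ∈ I, Metric.closedBall c (ρ / γ) := by
  have hγ0 : 0 < γ := lt_of_lt_of_le one_pos hγ
  set ε : ℝ := ρ / (2 * γ) with hε_def
  have hε : 0 < ε := by positivity
  have h2ε : 2 * ε = ρ / γ := by rw [hε_def]; field_simp
  have hρε : ρ + ε = (2 * γ + 1) * ε := by rw [hε_def]; field_simp
  have hpow1 : (1 : ℝ) ≤ (2 * γ + 1) ^ r := one_le_pow₀ (by linarith)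
  -- the elements of the maximal separated set
  set Psep : Set (Set (EuclideanSpace ℝ (Fin r))) :=
    {T | T ⊆ S ∧ ∀ x ∈ T, ∀ y ∈ T, x ≠ y → ρ / γ < dist x y} with hPsep
  obtain ⟨T, hTmax⟩ : ∃ T, Maximal (· ∈ Psep) T := by
    apply zorn_subset
    intro c hc hchain
    refine ⟨⋃₀ c, ⟨?_, ?_⟩, fun s hs => subset_sUnion_of_mem hs⟩
    · exact sUnion_subset fun t ht => (hc ht).1
    · intro x hx y hy hxy
      obtain ⟨tx, htx, hxtx⟩ := hx
      obtain ⟨ty, hty, hyty⟩ := hy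
      rcases hchain.total htx hty with h | h
      · exact (hc hty).2 x (h hxtx) y hyty hxy
      · exact (hc htx).2 x hxtx y (h hyty) hxy
  have hTS : T ⊆ S := hTmax.1.1
  have hTsep : ∀ x ∈ T, ∀ y ∈ T, x ≠ y → ρ / γ < dist x y := hTmax.1.2
  -- finite-subset cardinality bound
  have hcard : ∀ F : Finset (EuclideanSpace ℝ (Fin r)), ↑F ⊆ T →
      (F.card : ℝ) ≤ (2 * γ + 1) ^ r := by
    intro F hFT
    have := remond_card_bound hρ.le hε x₀ F
      (fun t ht => hS (hTS (hFT ht)))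
      (fun s hs t ht hst => by rw [h2ε]; exact hTsep s (hFT hs) t (hFT ht) hst)
    have hεr : (0 : ℝ) < ε ^ r := by positivity
    rw [hρε, mul_pow] at this
    exact le_of_mul_le_mul_right this hεr
  -- T is finite
  have hTfin : T.Finite := by
    by_contra hinf
    obtain ⟨F, hFT, hFfin, hFcard⟩ :=
      (Set.Infinite.exists_subset_ncard_eq hinf (⌊(2 * γ + 1) ^ r⌋.toNat + 1))

    have h1 := hcard hFfin.toFinset (by simpa using hFT)
    rw [Set.ncard_eq_toFinset_card F hFfin] at hFcard
    rw [hFcard] at h1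
    have h0 : (0 : ℤ) ≤ ⌊(2 * γ + 1) ^ r⌋ := Int.floor_nonneg.2 (by linarith)
    have h2 : (2 * γ + 1) ^ r - 1 < ((⌊(2 * γ + 1) ^ r⌋.toNat : ℤ) : ℝ) := by
      rw [Int.toNat_of_nonneg h0]
      exact_mod_cast Int.sub_one_lt_floor ((2 * γ + 1) ^ r)
    push_cast at h1
    push_cast at h2
    linarith
  refine ⟨hTfin.toFinset, by simpa using hTS, ?_, ?_⟩
  · rw [Int.le_floor]
    have := hcard hTfin.toFinset (by simp)
    exact_mod_cast this
  · intro s hsS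
    by_contra hcov
    simp only [mem_iUnion, not_exists, Finite.mem_toFinset, mem_closedBall] at hcov
    have hsT : s ∉ T := fun h => hcov s h (by simp; positivity)
    have hsep' : ∀ t ∈ T, ρ / γ < dist s t := by
      intro t ht
      exact lt_of_not_ge (hcov t ht)
    have : insert s T ∈ Psep := by
      refine ⟨insert_subset hsS hTS, ?_⟩
      intro x hx y hy hxy
      rcases hx with rfl | hx
      · rcases hy with rfl | hy
        · exact absurd rfl hxy
        · exact hsep' y hy
      · rcases hy with rfl | hy
        · rw [dist_comm]; exact hsep' x hx
        · exact hTsep x hx y hy hxy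
    exact hsT (hTmax.2 this (subset_insert s T) (mem_insert s T))
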